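/- arXiv:2507.01598 — 2 statements merged into one kernel-verified Lean document; each statement's English description precedes it below -/
import Mathlib

section
/- (One-step momentum contraction.) Let $f$ be $L$-smooth in Frobenius norm, and let $M_t = \beta M_{t-1} + (1-\beta) G_t$ where $G_t$ is an unbiased estimate of $\nabla f(W_t)$ with variance at most $\sigma^2/b$ (conditionally on the past), $\beta \in [0,1)$, and $\|W_{t-1} - W_t\|_F \le \eta\sqrt{n}$. Then $\mathbb{E}[\|M_t - \nabla f(W_t)\|_F^2] \le \frac{1+\beta}{2}\,\mathbb{E}[\|M_{t-1} - \nabla f(W_{t-1})\|_F^2] + \frac{2L^2\eta^2 n}{1-\beta} + \frac{(1-\beta)^2\sigma^2}{b}$. -/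
open Matrix MeasureTheory

noncomputable def fnorm {m n : ℕ} (A : Matrix (Fin m) (Fin n) ℝ) : ℝ :=
  Real.sqrt (Matrix.trace (Aᵀ * A))

def finner {m n : ℕ} (A B : Matrix (Fin m) (Fin n) ℝ) : ℝ :=
  Matrix.trace (Aᵀ * B)

noncomputable def emb {m n : ℕ} (A : Matrix (Fin m) (Fin n) ℝ) :
    EuclideanSpace ℝ (Fin m × Fin n) := WithLp.toLp 2 (fun p => A p.1 p.2)

lemma finner_eq {m n : ℕ} (A B : Matrix (Fin m) (Fin n) ℝ) :
    finner A B = inner ℝ (emb A) (emb B) := by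
  simp only [finner, Matrix.trace, Matrix.diag, Matrix.mul_apply, Matrix.transpose_apply,
    PiLp.inner_apply, RCLike.inner_apply, conj_trivial, emb, PiLp.toLp_apply]
  rw [show (∑ x : Fin m × Fin n, B x.1 x.2 * A x.1 x.2) = ∑ i, ∑ j, B i j * A i j from
    Fintype.sum_prod_type _]
  rw [Finset.sum_comm]
  exact Finset.sum_congr rfl fun i _ => Finset.sum_congr rfl fun j _ => mul_comm _ _

lemma fnorm_eq {m n : ℕ} (A : Matrix (Fin m) (Fin n) ℝ) : fnorm A = ‖emb A‖ := by
  rw [fnorm, show Matrix.trace (Aᵀ*A) = finner A A from rfl, finner_eq,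
    real_inner_self_eq_norm_sq, Real.sqrt_sq (norm_nonneg _)]

lemma emb_add {m n : ℕ} (A B : Matrix (Fin m) (Fin n) ℝ) : emb (A + B) = emb A + emb B := by
  ext p; simp [emb]
lemma emb_smul {m n : ℕ} (c : ℝ) (A : Matrix (Fin m) (Fin n) ℝ) : emb (c • A) = c • emb A := by
  ext p; simp [emb]

lemma key_ineq {E : Type*} [NormedAddCommGroup E] [InnerProductSpace ℝ E]
    (β C : ℝ) (hβ0 : 0 ≤ β) (hβ1 : β < 1) (hC : 0 ≤ C)
    (p q r : E) (hq : ‖q‖ ^ 2 ≤ C) :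
    ‖β•p + β•q + (1-β)•r‖^2 ≤ (1+β)/2 * ‖p‖^2 + 2*C/(1-β) + (1-β)^2*‖r‖^2
      + 2*β*(1-β)*(inner ℝ p r : ℝ) + 2*β*(1-β)*(inner ℝ q r : ℝ) := by
  have h1 : (0:ℝ) < 1 - β := by linarith
  have expand : ‖β•p + β•q + (1-β)•r‖^2 = β^2*‖p‖^2 + β^2*‖q‖^2 + (1-β)^2*‖r‖^2
      + 2*β^2*(inner ℝ p q : ℝ) + 2*β*(1-β)*(inner ℝ p r : ℝ) + 2*β*(1-β)*(inner ℝ q r : ℝ) := by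
    rw [← real_inner_self_eq_norm_sq, ← real_inner_self_eq_norm_sq p,
      ← real_inner_self_eq_norm_sq q, ← real_inner_self_eq_norm_sq r]
    simp only [inner_add_left, inner_add_right, real_inner_smul_left, real_inner_smul_right]
    rw [real_inner_comm q p, real_inner_comm r p, real_inner_comm r q]
    ring
  have hpq : (inner ℝ p q : ℝ) ≤ ‖p‖*‖q‖ := real_inner_le_norm p q
  have hp0 : (0:ℝ) ≤ ‖p‖^2 := sq_nonneg _
  have hq0 : (0:ℝ) ≤ ‖q‖^2 := sq_nonneg _
  have h2 : 4*(inner ℝ p q : ℝ)*(1-β) ≤ (1-β)^2*‖p‖^2 + 4*‖q‖^2 := by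
    nlinarith [sq_nonneg ((1-β)*‖p‖ - 2*‖q‖),
      mul_le_mul_of_nonneg_left hpq (by positivity : (0:ℝ) ≤ 4*(1-β))]
  have c1 : β^2*(3-β) ≤ 1+β := by nlinarith [mul_nonneg h1.le (by nlinarith : (0:ℝ) ≤ 1+2*β-β^2)]
  have c2 : β^2*(3-β) ≤ 2 := by nlinarith [mul_nonneg h1.le (by nlinarith : (0:ℝ) ≤ 2+2*β-β^2)]
  have key' : (β^2*‖p‖^2 + β^2*‖q‖^2 + 2*β^2*(inner ℝ p q : ℝ) - (1+β)/2*‖p‖^2)*(1-β) ≤ 2*C := by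
    nlinarith [mul_le_mul_of_nonneg_left h2 (by positivity : (0:ℝ) ≤ β^2/2),
      mul_le_mul_of_nonneg_left c1 (by positivity : (0:ℝ) ≤ ‖p‖^2/2 * (1-β)),
      mul_le_mul_of_nonneg_left c2 (by positivity : (0:ℝ) ≤ ‖q‖^2),
      mul_pos h1 h1, hq, hC]
  have := (le_div_iff₀ h1).mpr key'
  rw [expand]
  linarith [this]

/-- One-step momentum contraction. Let `g = ∇f` be `L`-Lipschitz in
Frobenius norm, `M_t = β M_{t-1} + (1-β) G_t` where `G_t` is an unbiased estimate of
`∇f(W_t)` with variance at most `σ²/b` whose noise is uncorrelated with the past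
(cross terms vanish in expectation), `β ∈ [0,1)`, and `‖W_{t-1} - W_t‖_F ≤ η√n`. Then
`𝔼‖M_t - ∇f(W_t)‖_F² ≤ (1+β)/2 · 𝔼‖M_{t-1} - ∇f(W_{t-1})‖_F² + 2L²η²n/(1-β) + (1-β)²σ²/b`. -/
theorem stmt_12 {m n : ℕ} (L η σ2 β : ℝ) (b : ℕ) (hb : 0 < b)
    (hL : 0 ≤ L) (hη : 0 ≤ η) (hβ0 : 0 ≤ β) (hβ1 : β < 1) (hσ : 0 ≤ σ2)
    {Ω : Type*} [MeasurableSpace Ω] (μ : Measure Ω) [IsProbabilityMeasure μ]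
    (g : Matrix (Fin m) (Fin n) ℝ → Matrix (Fin m) (Fin n) ℝ)
    (hlip : ∀ A B, fnorm (g A - g B) ≤ L * fnorm (A - B))
    (Mprev Wprev Wcur G M : Ω → Matrix (Fin m) (Fin n) ℝ)
    (hM : ∀ ω, M ω = β • Mprev ω + (1 - β) • G ω)
    (hdist : ∀ ω, fnorm (Wprev ω - Wcur ω) ≤ η * Real.sqrt n)
    (hint_prev : Integrable (fun ω => fnorm (Mprev ω - g (Wprev ω)) ^ 2) μ)
    (hint_noise : Integrable (fun ω => fnorm (G ω - g (Wcur ω)) ^ 2) μ)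
    (hint_cross1 : Integrable (fun ω => finner (Mprev ω - g (Wprev ω)) (G ω - g (Wcur ω))) μ)
    (hint_cross2 : Integrable (fun ω => finner (g (Wprev ω) - g (Wcur ω)) (G ω - g (Wcur ω))) μ)
    (hint_cross3 : Integrable (fun ω => finner (Mprev ω - g (Wprev ω)) (g (Wprev ω) - g (Wcur ω))) μ)
    (hvar : ∫ ω, fnorm (G ω - g (Wcur ω)) ^ 2 ∂μ ≤ σ2 / b)
    (hcross1 : ∫ ω, finner (Mprev ω - g (Wprev ω)) (G ω - g (Wcur ω)) ∂μ = 0)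
    (hcross2 : ∫ ω, finner (g (Wprev ω) - g (Wcur ω)) (G ω - g (Wcur ω)) ∂μ = 0) :
    ∫ ω, fnorm (M ω - g (Wcur ω)) ^ 2 ∂μ ≤
      (1 + β) / 2 * ∫ ω, fnorm (Mprev ω - g (Wprev ω)) ^ 2 ∂μ
      + 2 * L ^ 2 * η ^ 2 * n / (1 - β) + (1 - β) ^ 2 * σ2 / b := by
  set C : ℝ := L^2 * η^2 * (n:ℝ) with hCdef
  have hC : (0:ℝ) ≤ C := by positivity
  have hqbound : ∀ ω, fnorm (g (Wprev ω) - g (Wcur ω)) ^ 2 ≤ C := by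
    intro ω
    have h := (hlip (Wprev ω) (Wcur ω)).trans (mul_le_mul_of_nonneg_left (hdist ω) hL)
    have hnn : 0 ≤ fnorm (g (Wprev ω) - g (Wcur ω)) := Real.sqrt_nonneg _
    calc fnorm (g (Wprev ω) - g (Wcur ω)) ^ 2 ≤ (L * (η * Real.sqrt n))^2 :=
          pow_le_pow_left₀ hnn h 2
      _ = C := by
          rw [mul_pow, mul_pow, Real.sq_sqrt (Nat.cast_nonneg n), hCdef]
          ring
  have hpt : ∀ ω, fnorm (M ω - g (Wcur ω)) ^ 2 ≤
      (1+β)/2 * fnorm (Mprev ω - g (Wprev ω))^2 + 2*C/(1-β)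
      + (1-β)^2 * fnorm (G ω - g (Wcur ω))^2
      + 2*β*(1-β) * finner (Mprev ω - g (Wprev ω)) (G ω - g (Wcur ω))
      + 2*β*(1-β) * finner (g (Wprev ω) - g (Wcur ω)) (G ω - g (Wcur ω)) := by
    intro ω
    have hdecomp : M ω - g (Wcur ω) = β • (Mprev ω - g (Wprev ω))
        + β • (g (Wprev ω) - g (Wcur ω)) + (1-β) • (G ω - g (Wcur ω)) := by
      rw [hM ω]; module
    rw [hdecomp, fnorm_eq, emb_add, emb_add, emb_smul, emb_smul, emb_smul,
      fnorm_eq, fnorm_eq, finner_eq, finner_eq]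
    exact key_ineq β C hβ0 hβ1 hC _ _ _ (by rw [← fnorm_eq]; exact hqbound ω)
  have i1 := hint_prev.const_mul ((1+β)/2)
  have i2 : Integrable (fun _ : Ω => 2*C/(1-β)) μ := integrable_const _
  have i3 := hint_noise.const_mul ((1-β)^2)
  have i4 := hint_cross1.const_mul (2*β*(1-β))
  have i5 := hint_cross2.const_mul (2*β*(1-β))
  have hmono : ∫ ω, fnorm (M ω - g (Wcur ω)) ^ 2 ∂μ ≤
      ∫ ω, ((1+β)/2 * fnorm (Mprev ω - g (Wprev ω))^2 + 2*C/(1-β)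
      + (1-β)^2 * fnorm (G ω - g (Wcur ω))^2
      + 2*β*(1-β) * finner (Mprev ω - g (Wprev ω)) (G ω - g (Wcur ω))
      + 2*β*(1-β) * finner (g (Wprev ω) - g (Wcur ω)) (G ω - g (Wcur ω))) ∂μ := by
    refine integral_mono_of_nonneg (Filter.Eventually.of_forall fun ω => sq_nonneg _)
      ((((i1.add i2).add i3).add i4).add i5) (Filter.Eventually.of_forall hpt)
  have hval : ∫ ω, ((1+β)/2 * fnorm (Mprev ω - g (Wprev ω))^2 + 2*C/(1-β)
      + (1-β)^2 * fnorm (G ω - g (Wcur ω))^2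
      + 2*β*(1-β) * finner (Mprev ω - g (Wprev ω)) (G ω - g (Wcur ω))
      + 2*β*(1-β) * finner (g (Wprev ω) - g (Wcur ω)) (G ω - g (Wcur ω))) ∂μ
      = (1+β)/2 * (∫ ω, fnorm (Mprev ω - g (Wprev ω))^2 ∂μ) + 2*C/(1-β)
      + (1-β)^2 * (∫ ω, fnorm (G ω - g (Wcur ω))^2 ∂μ) := by
    have e1 := integral_add i1 i2
    have e2 := integral_add (i1.add i2) i3
    have e3 := integral_add ((i1.add i2).add i3) i4
    have e4 := integral_add (((i1.add i2).add i3).add i4) i5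
    simp only [Pi.add_apply] at e2 e3 e4
    rw [e4, e3, e2, e1,
      integral_const_mul, integral_const_mul, integral_const_mul, integral_const_mul,
      integral_const, hcross1, hcross2]
    simp
  have hfinal : (1-β)^2 * (∫ ω, fnorm (G ω - g (Wcur ω))^2 ∂μ) ≤ (1-β)^2 * (σ2 / b) :=
    mul_le_mul_of_nonneg_left hvar (sq_nonneg _)
  have hCeq : 2*C/(1-β) = 2 * L ^ 2 * η ^ 2 * n / (1 - β) := by rw [hCdef]; ring_nf
  rw [hval, hCeq] at hmono
  have : (1 - β) ^ 2 * σ2 / b = (1-β)^2 * (σ2 / b) := by ring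
  rw [this]
  linarith [hmono, hfinal]
end

section
/- (Descent inequality for orthogonalized updates.) Let $f : \mathbb{R}^{m\times n} \to \mathbb{R}$ be $L$-smooth with respect to the Frobenius norm, with the descent lemma $f(B) \le f(A) + \langle \nabla f(A), B-A\rangle_F + \frac{L}{2}\|B-A\|_F^2$. Suppose $W_{+} = W - \eta O$ where $O^\top O = I_n$ and $O$ maximizes $\langle C, \cdot\rangle_F$ over semi-orthogonal matrices for some matrix $C$. Then $f(W_+) \le f(W) + \eta\sqrt{n}\|C - \nabla f(W)\|_F - \eta\|\nabla f(W)\|_F + \frac{\eta}{2}\|\nabla f(W) - C\|_F^2 + \frac{(1+L\eta)\eta n}{2}$. -/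
open Matrix

section helpers
variable {m n : ℕ}

lemma finner_eq_sum (A B : Matrix (Fin m) (Fin n) ℝ) :
    finner A B = ∑ j, ∑ i, A i j * B i j := by
  simp [finner, Matrix.trace, Matrix.diag, Matrix.mul_apply]

lemma finner_self_nonneg (A : Matrix (Fin m) (Fin n) ℝ) : 0 ≤ finner A A := by
  rw [finner_eq_sum]
  exact Finset.sum_nonneg fun j _ => Finset.sum_nonneg fun i _ => mul_self_nonneg _

lemma fnorm_eq_sqrt (A : Matrix (Fin m) (Fin n) ℝ) : fnorm A = Real.sqrt (finner A A) := rfl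

lemma fnorm_nonneg (A : Matrix (Fin m) (Fin n) ℝ) : 0 ≤ fnorm A := Real.sqrt_nonneg _

lemma sq_fnorm (A : Matrix (Fin m) (Fin n) ℝ) : fnorm A ^ 2 = finner A A :=
  Real.sq_sqrt (finner_self_nonneg A)

lemma finner_abs_le (A B : Matrix (Fin m) (Fin n) ℝ) :
    |finner A B| ≤ fnorm A * fnorm B := by
  have hsq : finner A B ^ 2 ≤ finner A A * finner B B := by
    have h := Finset.sum_mul_sq_le_sq_mul_sq Finset.univ
      (fun p : Fin n × Fin m => A p.2 p.1) (fun p : Fin n × Fin m => B p.2 p.1)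
    simpa [finner_eq_sum, Fintype.sum_prod_type, sq] using h
  have h1 : |finner A B| = Real.sqrt (finner A B ^ 2) := (Real.sqrt_sq_eq_abs _).symm
  rw [h1, fnorm_eq_sqrt, fnorm_eq_sqrt, ← Real.sqrt_mul (finner_self_nonneg A)]
  exact Real.sqrt_le_sqrt hsq

lemma finner_comm (A B : Matrix (Fin m) (Fin n) ℝ) : finner A B = finner B A := by
  simp only [finner_eq_sum]
  exact Finset.sum_congr rfl fun j _ => Finset.sum_congr rfl fun i _ => mul_comm _ _

lemma finner_sub_left (A B C : Matrix (Fin m) (Fin n) ℝ) :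
    finner (A - B) C = finner A C - finner B C := by
  simp only [finner_eq_sum, Matrix.sub_apply, ← Finset.sum_sub_distrib]
  exact Finset.sum_congr rfl fun j _ => Finset.sum_congr rfl fun i _ => by ring

lemma finner_add_self (X Y : Matrix (Fin m) (Fin n) ℝ) :
    finner (X + Y) (X + Y) = finner X X + 2 * finner X Y + finner Y Y := by
  simp only [finner_eq_sum, Matrix.add_apply, Finset.mul_sum, ← Finset.sum_add_distrib]
  exact Finset.sum_congr rfl fun j _ => Finset.sum_congr rfl fun i _ => by ring

lemma fnorm_sub_comm (A B : Matrix (Fin m) (Fin n) ℝ) : fnorm (A - B) = fnorm (B - A) := by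
  rw [fnorm_eq_sqrt, fnorm_eq_sqrt]
  congr 1
  simp only [finner_eq_sum, Matrix.sub_apply]
  exact Finset.sum_congr rfl fun j _ => Finset.sum_congr rfl fun i _ => by ring

end helpers

lemma finner_smul_right {m n : ℕ} (c : ℝ) (A B : Matrix (Fin m) (Fin n) ℝ) :
    finner A (c • B) = c * finner A B := by
  simp only [finner_eq_sum, Matrix.smul_apply, smul_eq_mul, Finset.mul_sum]
  exact Finset.sum_congr rfl fun j _ => Finset.sum_congr rfl fun i _ => by ring

lemma finner_smul_smul {m n : ℕ} (c d : ℝ) (A B : Matrix (Fin m) (Fin n) ℝ) :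
    finner (c • A) (d • B) = (c * d) * finner A B := by
  simp only [finner_eq_sum, Matrix.smul_apply, smul_eq_mul, Finset.mul_sum]
  exact Finset.sum_congr rfl fun j _ => Finset.sum_congr rfl fun i _ => by ring

open RealInnerProductSpace in
lemma exists_good_O {m n : ℕ} (hmn : n ≤ m) (G : Matrix (Fin m) (Fin n) ℝ) :
    ∃ O' : Matrix (Fin m) (Fin n) ℝ, O'ᵀ * O' = 1 ∧ fnorm G ≤ finner G O' := by
  classical
  have hH : (Gᵀ * G).IsHermitian := by simpa using Matrix.isHermitian_conjTranspose_mul_self G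
  have hPSD : (Gᵀ * G).PosSemidef := by simpa using Matrix.posSemidef_conjTranspose_mul_self G
  set lam := hH.eigenvalues with hlamdef
  have hlam : ∀ i, 0 ≤ lam i := fun i => hPSD.eigenvalues_nonneg i
  set Q : Matrix (Fin n) (Fin n) ℝ := (hH.eigenvectorUnitary : Matrix (Fin n) (Fin n) ℝ) with hQdef
  have hQ1 : Qᵀ * Q = 1 := by
    have := hH.eigenvectorUnitary.2.1
    rw [← Matrix.conjTranspose_eq_transpose_of_trivial]; exact this
  have hQ2 : Q * Qᵀ = 1 := by
    have := hH.eigenvectorUnitary.2.2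
    rw [← Matrix.conjTranspose_eq_transpose_of_trivial]; exact this
  have hspec : Gᵀ * G = Q * Matrix.diagonal lam * Qᵀ := by
    have := hH.spectral_theorem
    rw [this, Unitary.conjStarAlgAut_apply, hQdef, hlamdef, Matrix.star_eq_conjTranspose,
      Matrix.conjTranspose_eq_transpose_of_trivial]
    rfl
  set M := G * Q with hMdef
  have hM : Mᵀ * M = Matrix.diagonal lam := by
    have h1 : Mᵀ * M = Qᵀ * (Gᵀ * G) * Q := by
      rw [hMdef, Matrix.transpose_mul]
      simp [Matrix.mul_assoc]
    rw [h1, hspec]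
    calc Qᵀ * (Q * Matrix.diagonal lam * Qᵀ) * Q
        = (Qᵀ * Q) * Matrix.diagonal lam * (Qᵀ * Q) := by simp [Matrix.mul_assoc]
      _ = Matrix.diagonal lam := by rw [hQ1]; simp
  have hMcol : ∀ i j : Fin n, ∑ k, M k i * M k j = if i = j then lam i else 0 := by
    intro i j
    have := congrFun (congrFun hM i) j
    simpa [Matrix.mul_apply, Matrix.diagonal_apply] using this
  -- columns of M as Euclidean vectors
  set col : Fin n → EuclideanSpace ℝ (Fin m) :=
    fun j => (WithLp.equiv 2 (Fin m → ℝ)).symm (fun k => M k j) with hcoldef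
  have hcol : ∀ i j, ⟪col i, col j⟫ = if i = j then lam i else 0 := by
    intro i j
    rw [PiLp.inner_apply]
    simpa [hcoldef, mul_comm] using hMcol i j
  set v : Fin m → EuclideanSpace ℝ (Fin m) := fun i =>
    if h : (i : ℕ) < n then (Real.sqrt (lam ⟨i, h⟩))⁻¹ • col ⟨i, h⟩ else 0 with hvdef
  set s : Set (Fin m) := {i | ∃ h : (i : ℕ) < n, lam ⟨i, h⟩ ≠ 0} with hsdef
  have hvmem : ∀ (i : Fin m) (h : (i : ℕ) < n),
      v i = (Real.sqrt (lam ⟨i, h⟩))⁻¹ • col ⟨i, h⟩ := fun i h => dif_pos h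
  have hv : Orthonormal ℝ (s.restrict v) := by
    rw [orthonormal_iff_ite]
    rintro ⟨i, hi, hine⟩ ⟨j, hj, hjne⟩
    simp only [Set.restrict, Set.domRestrict_apply, hvmem i hi, hvmem j hj,
      real_inner_smul_left, real_inner_smul_right, hcol]
    by_cases hij : i = j
    · subst hij
      simp only [if_pos rfl, Subtype.mk.injEq, if_pos rfl]
      have hpos : 0 < lam ⟨i, hi⟩ := lt_of_le_of_ne (hlam _) (Ne.symm hine)
      simp only [if_true]
      have hs : Real.sqrt (lam ⟨i, hi⟩) ≠ 0 := ne_of_gt (Real.sqrt_pos.mpr hpos)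
      field_simp
      rw [Real.sq_sqrt (hlam _)]
    · have hij' : (⟨i, hi⟩ : Fin n) ≠ ⟨j, hj⟩ := by
        simp only [ne_eq, Fin.mk.injEq]; exact fun h => hij (Fin.ext h)
      simp [hij', hij]
  obtain ⟨b, hb⟩ := hv.exists_orthonormalBasis_extension_of_card_eq (by simp)
  set U : Matrix (Fin m) (Fin n) ℝ := Matrix.of fun k j => b (Fin.castLE hmn j) k with hUdef
  have hU : Uᵀ * U = 1 := by
    ext i j
    have hbij := orthonormal_iff_ite.mp b.orthonormal (Fin.castLE hmn i) (Fin.castLE hmn j)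
    rw [PiLp.inner_apply] at hbij
    simp only [Matrix.mul_apply, Matrix.transpose_apply, hUdef, Matrix.of_apply,
      Matrix.one_apply]
    simp only [RCLike.inner_apply, conj_trivial] at hbij
    simp only [mul_comm] at hbij ⊢
    rw [hbij]
    simp [Fin.castLE_inj]
  have hbv : ∀ j : Fin n, lam j ≠ 0 → ∀ k, U k j = (Real.sqrt (lam j))⁻¹ * M k j := by
    intro j hj k
    have hlt : ((Fin.castLE hmn j : Fin m) : ℕ) < n := by simpa using j.isLt
    have hfin : (⟨((Fin.castLE hmn j : Fin m) : ℕ), hlt⟩ : Fin n) = j := by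
      apply Fin.ext; simp
    have hmem : (Fin.castLE hmn j) ∈ s := by
      refine ⟨hlt, ?_⟩
      rw [hfin]; exact hj
    have hbvj : b (Fin.castLE hmn j) = v (Fin.castLE hmn j) := hb _ hmem
    have : v (Fin.castLE hmn j) = (Real.sqrt (lam j))⁻¹ • col j := by
      rw [hvmem _ hlt, hfin]
    rw [hUdef]
    simp only [Matrix.of_apply, hbvj, this]
    simp [hcoldef]
  have hval : ∀ j : Fin n, ∑ k, M k j * U k j = Real.sqrt (lam j) := by
    intro j
    by_cases hj : lam j = 0
    · have h0 : ∑ k, M k j * M k j = 0 := by rw [hMcol j j]; simp [hj]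
      have hzero : ∀ k, M k j = 0 := by
        intro k
        have := (Finset.sum_eq_zero_iff_of_nonneg
          (fun k _ => mul_self_nonneg (M k j))).mp h0 k (Finset.mem_univ k)
        exact mul_self_eq_zero.mp this
      simp [hzero, hj]
    · have : ∀ k, M k j * U k j = (Real.sqrt (lam j))⁻¹ * (M k j * M k j) := by
        intro k; rw [hbv j hj k]; ring
      rw [Finset.sum_congr rfl fun k _ => this k, ← Finset.mul_sum, hMcol j j]
      simp only [if_true]
      have hpos : 0 < lam j := lt_of_le_of_ne (hlam j) (Ne.symm hj)
      have hs : Real.sqrt (lam j) ≠ 0 := ne_of_gt (Real.sqrt_pos.mpr hpos)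
      field_simp
      rw [Real.sq_sqrt (hlam j)]
  refine ⟨U * Qᵀ, ?_, ?_⟩
  · rw [Matrix.transpose_mul, Matrix.transpose_transpose]
    calc Q * Uᵀ * (U * Qᵀ) = Q * (Uᵀ * U) * Qᵀ := by simp [Matrix.mul_assoc]
      _ = 1 := by rw [hU, Matrix.mul_one, hQ2]
  · have htr : finner G (U * Qᵀ) = finner M U := by
      unfold finner
      rw [← Matrix.mul_assoc, Matrix.trace_mul_cycle, ← Matrix.transpose_mul, ← hMdef]
    have hsum : finner M U = ∑ j, Real.sqrt (lam j) := by
      rw [finner_eq_sum]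
      exact Finset.sum_congr rfl fun j _ => hval j
    have htraceH : Matrix.trace (Gᵀ * G) = ∑ j, lam j := by
      rw [hspec, Matrix.trace_mul_cycle, hQ1, Matrix.one_mul, Matrix.trace_diagonal]
    have h1 : ∑ j, lam j ≤ (∑ j, Real.sqrt (lam j)) ^ 2 := by
      have h2 := Finset.sum_sq_le_sq_sum_of_nonneg
        (f := fun j : Fin n => Real.sqrt (lam j)) (s := Finset.univ)
        (fun i _ => Real.sqrt_nonneg _)
      simpa [Real.sq_sqrt (hlam _)] using h2
    have hfn : fnorm G = Real.sqrt (∑ j, lam j) := by rw [fnorm, htraceH]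
    rw [hfn, htr, hsum]
    calc Real.sqrt (∑ j, lam j) ≤ Real.sqrt ((∑ j, Real.sqrt (lam j)) ^ 2) :=
          Real.sqrt_le_sqrt h1
      _ = ∑ j, Real.sqrt (lam j) := Real.sqrt_sq
          (Finset.sum_nonneg fun j _ => Real.sqrt_nonneg _)


/-- Descent inequality for orthogonalized updates. Let `f` be `L`-smooth
w.r.t. the Frobenius norm with gradient `g`, satisfying the descent lemma
`f(B) ≤ f(A) + ⟨g(A), B-A⟩_F + (L/2)‖B-A‖_F²`. Suppose `W₊ = W - η O` where
`Oᵀ O = Iₙ` and `O` maximizes `⟨C, ·⟩_F` over semi-orthogonal matrices. Then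
`f(W₊) ≤ f(W) + η√n‖C - g(W)‖_F - η‖g(W)‖_F + (η/2)‖g(W) - C‖_F² + (1+Lη)ηn/2`. -/
theorem stmt_14 {m n : ℕ} (hmn : n ≤ m) (L η : ℝ) (hL : 0 ≤ L) (hη : 0 < η)
    (f : Matrix (Fin m) (Fin n) ℝ → ℝ)
    (g : Matrix (Fin m) (Fin n) ℝ → Matrix (Fin m) (Fin n) ℝ)
    (hdesc : ∀ A B, f B ≤ f A + finner (g A) (B - A) + L / 2 * fnorm (B - A) ^ 2)
    (C O W Wplus : Matrix (Fin m) (Fin n) ℝ)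
    (hO : Oᵀ * O = 1)
    (hmax : ∀ O' : Matrix (Fin m) (Fin n) ℝ, O'ᵀ * O' = 1 → finner C O' ≤ finner C O)
    (hupdate : Wplus = W - η • O) :
    f Wplus ≤ f W + η * Real.sqrt n * fnorm (C - g W) - η * fnorm (g W)
      + η / 2 * fnorm (g W - C) ^ 2 + (1 + L * η) * η * n / 2 := by
  have hOO : finner O O = (n : ℝ) := by
    unfold finner; rw [hO, Matrix.trace_one]; simp
  obtain ⟨O'', hO''1, hO''2⟩ := exists_good_O hmn (g W)
  have hO''O'' : finner O'' O'' = (n : ℝ) := by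
    unfold finner; rw [hO''1, Matrix.trace_one]; simp
  have hfnO'' : fnorm O'' = Real.sqrt n := by rw [fnorm_eq_sqrt, hO''O'']
  have hCS : -(fnorm (C - g W) * Real.sqrt n) ≤ finner (C - g W) O'' := by
    have h := finner_abs_le (C - g W) O''
    rw [hfnO''] at h
    linarith [neg_abs_le (finner (C - g W) O''), abs_nonneg (finner (C - g W) O''),
      le_abs_self (finner (C - g W) O'')]
  have hCO : fnorm (g W) - fnorm (C - g W) * Real.sqrt n ≤ finner C O := by
    refine le_trans ?_ (hmax O'' hO''1)
    have h1 := finner_sub_left C (g W) O''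
    linarith [hO''2]
  have hpol : -(finner (g W - C) (g W - C) / 2 + n / 2) ≤ finner (g W - C) O := by
    have h0 : 0 ≤ finner ((g W - C) + O) ((g W - C) + O) := finner_self_nonneg _
    rw [finner_add_self, hOO] at h0
    linarith
  have hsplit : finner (g W) O = finner (g W - C) O + finner C O := by
    have := finner_sub_left (g W) C O; linarith
  have hkey := hdesc W Wplus
  have hWd : Wplus - W = (-η) • O := by
    rw [hupdate]; ext i j; simp [Matrix.sub_apply]
  rw [hWd] at hkey
  have hinner : finner (g W) ((-η) • O) = -η * finner (g W) O := finner_smul_right _ _ _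
  have hfnsq : fnorm ((-η) • O) ^ 2 = η ^ 2 * n := by
    rw [sq_fnorm, finner_smul_smul, hOO]; ring
  rw [hinner, hfnsq] at hkey
  have hsqX : finner (g W - C) (g W - C) = fnorm (g W - C) ^ 2 := (sq_fnorm _).symm
  have hXlb : fnorm (g W) - fnorm (C - g W) * Real.sqrt n
      - (fnorm (g W - C) ^ 2 / 2 + n / 2) ≤ finner (g W) O := by
    rw [hsplit]; rw [hsqX] at hpol; linarith
  have hmul := mul_le_mul_of_nonneg_left hXlb hη.le
  nlinarith [hkey, hmul, sq_nonneg η, Real.sqrt_nonneg (n : ℝ), hη.le]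
end
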